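/- Let W and W̃ be symmetric n×n real matrices with nonnegative entries and no zero rows, and let ν = (max_{i,j} W_{ij}/W̃_{ij})·(max_{i,j} W̃_{ij}/W_{ij}) (ratios taken as 1 when both numerator and denominator are 0, and +∞ if exactly one is 0; assume ν is finite). Then the second-smallest eigenvalue of the normalized Laplacian of W̃ is at most ν times the second-smallest eigenvalue of the normalized Laplacian of W. -/

import Mathlib

open Matrix Finset

/-- ratio with the convention that `0/0 = 1`. -/
noncomputable def ratio01 (a b : ℝ) : ℝ := if a = 0 ∧ b = 0 then 1 else a / b

/-- The normalized Laplacian `I - a⁻¹ A a⁻¹` where `a` is the diagonal matrix with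
`a_{ii} = sqrt (Σ_j A_{ij})`. -/
noncomputable def normLap {n : ℕ} (A : Matrix (Fin n) (Fin n) ℝ) : Matrix (Fin n) (Fin n) ℝ :=
  1 - Matrix.of fun i j => A i j / (Real.sqrt (∑ k, A i k) * Real.sqrt (∑ k, A j k))

/-- The second-smallest eigenvalue of the normalized Laplacian of `A`, characterized
variationally as the infimum of the Rayleigh quotient over nonzero vectors orthogonal to
the kernel vector `(sqrt (Σ_j A_{ij}))_i`. -/
noncomputable def lambdaUp2 {n : ℕ} (A : Matrix (Fin n) (Fin n) ℝ) : ℝ :=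
  sInf {r : ℝ | ∃ x : Fin n → ℝ, x ≠ 0 ∧ (∑ i, x i * Real.sqrt (∑ k, A i k)) = 0 ∧
    r = (∑ i, ∑ j, x i * normLap A i j * x j) / (∑ i, x i ^ 2)}

set_option maxHeartbeats 1000000

lemma rowsum_pos {n : ℕ} (A : Matrix (Fin n) (Fin n) ℝ) (hnn : ∀ i j, 0 ≤ A i j)
    (hrow : ∀ i, ∃ j, 0 < A i j) (i : Fin n) : 0 < ∑ k, A i k := by
  obtain ⟨j, hj⟩ := hrow i
  exact Finset.sum_pos' (fun k _ => hnn i k) ⟨j, Finset.mem_univ j, hj⟩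

lemma quad_form {n : ℕ} (A : Matrix (Fin n) (Fin n) ℝ) (hsym : A.IsSymm)
    (hd : ∀ i, 0 < ∑ k, A i k) (y : Fin n → ℝ) :
    ∑ i, ∑ j, (Real.sqrt (∑ k, A i k) * y i) * normLap A i j * (Real.sqrt (∑ k, A j k) * y j)
      = 2⁻¹ * ∑ i, ∑ j, A i j * (y i - y j)^2 := by
  set s : Fin n → ℝ := fun i => Real.sqrt (∑ k, A i k) with hs
  have hspos : ∀ i, 0 < s i := fun i => Real.sqrt_pos.2 (hd i)
  have hs2 : ∀ i, s i ^ 2 = ∑ k, A i k := fun i => Real.sq_sqrt (hd i).le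
  have hne : ∀ i, s i ≠ 0 := fun i => (hspos i).ne'
  have hAsym : ∀ i j, A j i = A i j := fun i j => hsym.apply i j
  have key : ∀ i j, (s i * y i) * normLap A i j * (s j * y j)
      = (if i = j then (s i * y i) * (s i * y i) else 0) - A i j * (y i * y j) := by
    intro i j
    by_cases h : i = j
    · subst h
      simp only [normLap, Matrix.sub_apply, Matrix.one_apply_eq, Matrix.of_apply, if_pos rfl]
      rw [show Real.sqrt (∑ k, A i k) = s i from rfl, if_true]
      field_simp [hne i]
    · simp only [normLap, Matrix.sub_apply, Matrix.one_apply_ne h, Matrix.of_apply, if_neg h]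
      rw [show Real.sqrt (∑ k, A i k) = s i from rfl, show Real.sqrt (∑ k, A j k) = s j from rfl]
      field_simp [hne i, hne j]
      ring
  have lhs_eq : ∑ i, ∑ j, (s i * y i) * normLap A i j * (s j * y j)
      = (∑ i, (∑ k, A i k) * y i ^ 2) - ∑ i, ∑ j, A i j * (y i * y j) := by
    simp only [key, Finset.sum_sub_distrib, Finset.sum_ite_eq, Finset.mem_univ, if_true]
    congr 1
    refine Finset.sum_congr rfl fun i _ => ?_
    rw [← hs2 i]; ring
  have e1 : ∑ i, ∑ j, A i j * y i ^ 2 = ∑ i, (∑ k, A i k) * y i ^ 2 := by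
    refine Finset.sum_congr rfl fun i _ => ?_
    rw [Finset.sum_mul]
  have e2 : ∑ i, ∑ j, A i j * y j ^ 2 = ∑ i, (∑ k, A i k) * y i ^ 2 := by
    rw [Finset.sum_comm]
    refine Finset.sum_congr rfl fun j _ => ?_
    rw [Finset.sum_mul]
    exact Finset.sum_congr rfl fun i _ => by rw [hAsym i j]
  have rhs_eq : 2⁻¹ * ∑ i, ∑ j, A i j * (y i - y j)^2
      = (∑ i, (∑ k, A i k) * y i ^ 2) - ∑ i, ∑ j, A i j * (y i * y j) := by
    have expand : ∀ i j, A i j * (y i - y j)^2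
        = A i j * y i ^ 2 + A i j * y j ^ 2 - 2 * (A i j * (y i * y j)) := fun i j => by ring
    simp only [expand, Finset.sum_sub_distrib, Finset.sum_add_distrib, ← Finset.mul_sum]
    rw [e1, e2]
    ring
  rw [lhs_eq, rhs_eq]

lemma main_aux {n : ℕ} (W Wt : Matrix (Fin n) (Fin n) ℝ) (hn : 2 ≤ n)
    (hWsym : W.IsSymm) (hWtsym : Wt.IsSymm)
    (hWnn : ∀ i j, 0 ≤ W i j) (hWtnn : ∀ i j, 0 ≤ Wt i j)
    (hWrow : ∀ i, ∃ j, 0 < W i j) (hWtrow : ∀ i, ∃ j, 0 < Wt i j)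
    (A1 A2 : ℝ) (hA1pos : 0 < A1) (hA2pos : 0 < A2)
    (hA1 : ∀ i j, W i j ≤ A1 * Wt i j) (hA2 : ∀ i j, Wt i j ≤ A2 * W i j) :
    lambdaUp2 Wt ≤ (A1 * A2) * lambdaUp2 W := by
  haveI : Nonempty (Fin n) := ⟨⟨0, by omega⟩⟩
  have hdW : ∀ i, 0 < ∑ k, W i k := rowsum_pos W hWnn hWrow
  have hdWt : ∀ i, 0 < ∑ k, Wt i k := rowsum_pos Wt hWtnn hWtrow
  have hsW : ∀ i, 0 < Real.sqrt (∑ k, W i k) := fun i => Real.sqrt_pos.2 (hdW i)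
  have hsWt : ∀ i, 0 < Real.sqrt (∑ k, Wt i k) := fun i => Real.sqrt_pos.2 (hdWt i)
  have hsW2 : ∀ i, Real.sqrt (∑ k, W i k) ^ 2 = ∑ k, W i k := fun i => Real.sq_sqrt (hdW i).le
  have hsWt2 : ∀ i, Real.sqrt (∑ k, Wt i k) ^ 2 = ∑ k, Wt i k := fun i => Real.sq_sqrt (hdWt i).le
  -- the two Rayleigh-quotient sets
  set SW := {r : ℝ | ∃ x : Fin n → ℝ, x ≠ 0 ∧ (∑ i, x i * Real.sqrt (∑ k, W i k)) = 0 ∧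
    r = (∑ i, ∑ j, x i * normLap W i j * x j) / (∑ i, x i ^ 2)} with hSWdef
  set SWt := {r : ℝ | ∃ x : Fin n → ℝ, x ≠ 0 ∧ (∑ i, x i * Real.sqrt (∑ k, Wt i k)) = 0 ∧
    r = (∑ i, ∑ j, x i * normLap Wt i j * x j) / (∑ i, x i ^ 2)} with hSWtdef
  have hL1 : lambdaUp2 W = sInf SW := rfl
  have hL2 : lambdaUp2 Wt = sInf SWt := rfl
  -- SWt is bounded below by 0
  have bddWt : ∀ r ∈ SWt, (0:ℝ) ≤ r := by
    rintro r ⟨x, hx0, -, rfl⟩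
    have hx : ∀ i, Real.sqrt (∑ k, Wt i k) * (x i / Real.sqrt (∑ k, Wt i k)) = x i := by
      intro i; rw [mul_comm, div_mul_cancel₀ _ (hsWt i).ne']
    have h := quad_form Wt hWtsym hdWt (fun i => x i / Real.sqrt (∑ k, Wt i k))
    simp only [hx] at h
    rw [h]
    have : 0 ≤ ∑ i, ∑ j, Wt i j * (x i / Real.sqrt (∑ k, Wt i k) - x j / Real.sqrt (∑ k, Wt j k))^2 :=
      Finset.sum_nonneg fun i _ => Finset.sum_nonneg fun j _ => mul_nonneg (hWtnn i j) (sq_nonneg _)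
    positivity
  have bddWt' : BddBelow SWt := ⟨0, fun r hr => bddWt r hr⟩
  -- SW is nonempty
  have hSWne : SW.Nonempty := by
    set i0 : Fin n := ⟨0, by omega⟩
    set i1 : Fin n := ⟨1, by omega⟩
    have h01 : i0 ≠ i1 := by simp [i0, i1, Fin.ext_iff]
    set x : Fin n → ℝ := fun i =>
      (if i = i0 then Real.sqrt (∑ k, W i1 k) else 0) +
      (if i = i1 then -Real.sqrt (∑ k, W i0 k) else 0) with hxdef
    refine ⟨_, x, ?_, ?_, rfl⟩
    · intro h
      have := congrFun h i0
      simp [x, h01, Pi.zero_apply] at this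
      exact (hsW i1).ne' this
    · have expand : ∀ i, x i * Real.sqrt (∑ k, W i k) =
          (if i = i0 then Real.sqrt (∑ k, W i1 k) * Real.sqrt (∑ k, W i k) else 0) +
          (if i = i1 then -(Real.sqrt (∑ k, W i0 k) * Real.sqrt (∑ k, W i k)) else 0) := by
        intro i
        simp only [x, add_mul, ite_mul, zero_mul, neg_mul]
      simp only [expand, Finset.sum_add_distrib, Finset.sum_ite_eq', Finset.mem_univ, if_true]
      ring
  -- main comparison
  have key : ∀ r ∈ SW, sInf SWt ≤ (A1 * A2) * r := by
    rintro r ⟨x, hx0, hortho, rfl⟩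
    set y : Fin n → ℝ := fun i => x i / Real.sqrt (∑ k, W i k) with hydef
    have hxy : ∀ i, Real.sqrt (∑ k, W i k) * y i = x i := by
      intro i; rw [hydef, mul_comm, div_mul_cancel₀ _ (hsW i).ne']
    have hO : ∑ i, (∑ k, W i k) * y i = 0 := by
      rw [← hortho]
      refine Finset.sum_congr rfl fun i _ => ?_
      calc (∑ k, W i k) * y i = Real.sqrt (∑ k, W i k) ^ 2 * y i := by rw [hsW2]
        _ = (Real.sqrt (∑ k, W i k) * y i) * Real.sqrt (∑ k, W i k) := by ring
        _ = x i * Real.sqrt (∑ k, W i k) := by rw [hxy]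
    set DT : ℝ := ∑ i, ∑ k, Wt i k with hDTdef
    have hDTpos : 0 < DT := Finset.sum_pos (fun i _ => hdWt i) univ_nonempty
    set c : ℝ := (∑ i, (∑ k, Wt i k) * y i) / DT with hcdef
    set z : Fin n → ℝ := fun i => y i - c with hzdef
    set x' : Fin n → ℝ := fun i => Real.sqrt (∑ k, Wt i k) * z i with hx'def
    have hx'0 : x' ≠ 0 := by
      intro h
      have hz0 : ∀ i, z i = 0 := by
        intro i
        have := congrFun h i
        simp only [hx'def, Pi.zero_apply] at this
        exact (mul_eq_zero.1 this).resolve_left (hsWt i).ne'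
      have hyc : ∀ i, y i = c := fun i => sub_eq_zero.1 (hz0 i)
      have hc0 : c = 0 := by
        have h1 : ∑ i, (∑ k, W i k) * y i = c * ∑ i, ∑ k, W i k := by
          rw [Finset.mul_sum]
          exact Finset.sum_congr rfl fun i _ => by rw [hyc i]; ring
        have h2 : 0 < ∑ i, ∑ k, W i k := Finset.sum_pos (fun i _ => hdW i) univ_nonempty
        rw [hO] at h1
        exact (mul_eq_zero.1 h1.symm).resolve_right h2.ne'
      apply hx0
      funext i
      have := hyc i
      rw [hc0] at this
      have : x i = 0 := by rw [← hxy i, this, mul_zero]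
      simpa using this
    have hortho' : ∑ i, x' i * Real.sqrt (∑ k, Wt i k) = 0 := by
      have : ∀ i, x' i * Real.sqrt (∑ k, Wt i k) = (∑ k, Wt i k) * y i - c * (∑ k, Wt i k) := by
        intro i
        simp only [hx'def, hzdef]
        rw [show Real.sqrt (∑ k, Wt i k) * (y i - c) * Real.sqrt (∑ k, Wt i k)
            = Real.sqrt (∑ k, Wt i k) ^2 * (y i - c) by ring, hsWt2 i]
        ring
      simp only [this, Finset.sum_sub_distrib, ← Finset.mul_sum]
      rw [hcdef, ← hDTdef, div_mul_cancel₀ _ hDTpos.ne']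
      ring
    have hmem : (∑ i, ∑ j, x' i * normLap Wt i j * x' j) / (∑ i, x' i ^ 2) ∈ SWt :=
      ⟨x', hx'0, hortho', rfl⟩
    -- identify numerators via quad_form
    have hQW : (∑ i, ∑ j, x i * normLap W i j * x j)
        = 2⁻¹ * ∑ i, ∑ j, W i j * (y i - y j)^2 := by
      have h := quad_form W hWsym hdW y
      simp only [hxy] at h
      exact h
    have hQT : (∑ i, ∑ j, x' i * normLap Wt i j * x' j)
        = 2⁻¹ * ∑ i, ∑ j, Wt i j * (y i - y j)^2 := by
      have h := quad_form Wt hWtsym hdWt z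
      have hzz : ∀ i j, z i - z j = y i - y j := by intro i j; simp [hzdef]
      simp only [hzz] at h
      exact h
    -- denominators
    have hNx : ∑ i, x i ^ 2 = ∑ i, (∑ k, W i k) * y i ^ 2 := by
      refine Finset.sum_congr rfl fun i _ => ?_
      rw [← hxy i, mul_pow, hsW2 i]
    have hNx' : ∑ i, x' i ^ 2 = ∑ i, (∑ k, Wt i k) * z i ^ 2 := by
      refine Finset.sum_congr rfl fun i _ => ?_
      simp only [hx'def]
      rw [mul_pow, hsWt2 i]
    have hDxpos : 0 < ∑ i, x i ^ 2 := by
      obtain ⟨i, hi⟩ := Function.ne_iff.1 hx0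
      exact Finset.sum_pos' (fun j _ => sq_nonneg _)
        ⟨i, Finset.mem_univ i, pow_pos (abs_pos.2 hi) 2 |>.trans_eq (by rw [sq_abs]) |>.trans_le le_rfl⟩
    -- numerator comparison
    have hnum : 2⁻¹ * ∑ i, ∑ j, Wt i j * (y i - y j)^2
        ≤ A2 * (2⁻¹ * ∑ i, ∑ j, W i j * (y i - y j)^2) := by
      have h1 : ∀ i j, Wt i j * (y i - y j)^2 ≤ A2 * (W i j * (y i - y j)^2) := by
        intro i j
        calc Wt i j * (y i - y j)^2 ≤ (A2 * W i j) * (y i - y j)^2 :=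
              mul_le_mul_of_nonneg_right (hA2 i j) (sq_nonneg _)
          _ = A2 * (W i j * (y i - y j)^2) := by ring
      calc 2⁻¹ * ∑ i, ∑ j, Wt i j * (y i - y j)^2
          ≤ 2⁻¹ * ∑ i, ∑ j, A2 * (W i j * (y i - y j)^2) := by
            refine mul_le_mul_of_nonneg_left ?_ (by norm_num)
            exact Finset.sum_le_sum fun i _ => Finset.sum_le_sum fun j _ => h1 i j
        _ = A2 * (2⁻¹ * ∑ i, ∑ j, W i j * (y i - y j)^2) := by
            simp only [← Finset.mul_sum]
            ring
    -- denominator comparison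
    have hden1 : ∑ i, (∑ k, W i k) * y i ^ 2 ≤ ∑ i, (∑ k, W i k) * z i ^ 2 := by
      have expand : ∀ i, (∑ k, W i k) * z i ^ 2
          = (∑ k, W i k) * y i ^ 2 - 2 * c * ((∑ k, W i k) * y i) + c^2 * (∑ k, W i k) := by
        intro i; simp only [hzdef]; ring
      have : ∑ i, (∑ k, W i k) * z i ^ 2
          = ∑ i, (∑ k, W i k) * y i ^ 2 + c^2 * ∑ i, ∑ k, W i k := by
        simp only [expand, Finset.sum_sub_distrib, Finset.sum_add_distrib, ← Finset.mul_sum, hO]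
        ring
      rw [this]
      have : 0 ≤ c^2 * ∑ i, ∑ k, W i k :=
        mul_nonneg (sq_nonneg c) (Finset.sum_nonneg fun i _ => (hdW i).le)
      linarith
    have hden2 : ∑ i, (∑ k, W i k) * z i ^ 2 ≤ A1 * ∑ i, (∑ k, Wt i k) * z i ^ 2 := by
      rw [Finset.mul_sum]
      refine Finset.sum_le_sum fun i _ => ?_
      have hrow : (∑ k, W i k) ≤ A1 * ∑ k, Wt i k := by
        rw [Finset.mul_sum]
        exact Finset.sum_le_sum fun k _ => hA1 i k
      calc (∑ k, W i k) * z i ^ 2 ≤ (A1 * ∑ k, Wt i k) * z i ^ 2 :=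
            mul_le_mul_of_nonneg_right hrow (sq_nonneg _)
        _ = A1 * ((∑ k, Wt i k) * z i ^ 2) := by ring
    have hDx' : (∑ i, x i ^ 2) ≤ A1 * ∑ i, x' i ^ 2 := by
      rw [hNx, hNx']
      exact hden1.trans hden2
    have hNx'pos : 0 < ∑ i, x' i ^ 2 := by
      obtain ⟨i, hi⟩ := Function.ne_iff.1 hx'0
      exact Finset.sum_pos' (fun j _ => sq_nonneg _)
        ⟨i, Finset.mem_univ i, pow_pos (abs_pos.2 hi) 2 |>.trans_eq (by rw [sq_abs]) |>.trans_le le_rfl⟩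
    have hQWnn : 0 ≤ 2⁻¹ * ∑ i, ∑ j, W i j * (y i - y j)^2 := by
      have : 0 ≤ ∑ i, ∑ j, W i j * (y i - y j)^2 :=
        Finset.sum_nonneg fun i _ => Finset.sum_nonneg fun j _ =>
          mul_nonneg (hWnn i j) (sq_nonneg _)
      positivity
    -- final arithmetic
    have hfinal : (∑ i, ∑ j, x' i * normLap Wt i j * x' j) / (∑ i, x' i ^ 2)
        ≤ (A1 * A2) * ((∑ i, ∑ j, x i * normLap W i j * x j) / (∑ i, x i ^ 2)) := by
      rw [hQW, hQT]
      set P : ℝ := ∑ i, ∑ j, W i j * (y i - y j)^2 with hP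
      set T : ℝ := ∑ i, ∑ j, Wt i j * (y i - y j)^2 with hT
      set Dx : ℝ := ∑ i, x i ^ 2 with hDxd
      set Nt : ℝ := ∑ i, x' i ^ 2 with hNtd
      have step : 2⁻¹ * T / Nt ≤ (A2 * (2⁻¹ * P)) / (Dx / A1) :=
        div_le_div₀ (mul_nonneg hA2pos.le hQWnn) hnum (by positivity)
          ((div_le_iff₀ hA1pos).2 (by linarith [hDx']))
      refine step.trans (le_of_eq ?_)
      rw [div_div_eq_mul_div]
      field_simp
    exact (csInf_le bddWt' hmem).trans hfinal
  -- conclude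
  have hνpos : 0 < A1 * A2 := mul_pos hA1pos hA2pos
  rw [hL1, hL2]
  have h2 : sInf SWt / (A1 * A2) ≤ sInf SW :=
    le_csInf hSWne fun r hr => (div_le_iff₀ hνpos).2 (by rw [mul_comm]; exact key r hr)
  calc sInf SWt = (A1 * A2) * (sInf SWt / (A1 * A2)) := by field_simp
    _ ≤ (A1 * A2) * sInf SW := by
        exact mul_le_mul_of_nonneg_left h2 hνpos.le

theorem laplacian_stability {n : ℕ} (W Wt : Matrix (Fin n) (Fin n) ℝ)
    (hn : 2 ≤ n)
    (hWsym : W.IsSymm) (hWtsym : Wt.IsSymm)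
    (hWnn : ∀ i j, 0 ≤ W i j) (hWtnn : ∀ i j, 0 ≤ Wt i j)
    (hWrow : ∀ i, ∃ j, 0 < W i j) (hWtrow : ∀ i, ∃ j, 0 < Wt i j)
    (hsupp : ∀ i j, W i j = 0 ↔ Wt i j = 0)
    (ν : ℝ)
    (hν : ν = (Finset.univ.sup' ⟨(⟨0, by omega⟩, ⟨0, by omega⟩), Finset.mem_univ _⟩ fun p : Fin n × Fin n =>
        ratio01 (W p.1 p.2) (Wt p.1 p.2)) *
      (Finset.univ.sup' ⟨(⟨0, by omega⟩, ⟨0, by omega⟩), Finset.mem_univ _⟩ fun p : Fin n × Fin n =>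
        ratio01 (Wt p.1 p.2) (W p.1 p.2))) :
    lambdaUp2 Wt ≤ ν * lambdaUp2 W := by
  rw [hν]
  set A1 := (Finset.univ.sup' ⟨(⟨0, by omega⟩, ⟨0, by omega⟩), Finset.mem_univ _⟩
      fun p : Fin n × Fin n => ratio01 (W p.1 p.2) (Wt p.1 p.2)) with hA1d
  set A2 := (Finset.univ.sup' ⟨(⟨0, by omega⟩, ⟨0, by omega⟩), Finset.mem_univ _⟩
      fun p : Fin n × Fin n => ratio01 (Wt p.1 p.2) (W p.1 p.2)) with hA2d
  have key1 : ∀ i j, ratio01 (W i j) (Wt i j) ≤ A1 := fun i j => by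
    rw [hA1d]
    exact Finset.le_sup' (fun p : Fin n × Fin n => ratio01 (W p.1 p.2) (Wt p.1 p.2))
      (Finset.mem_univ (i, j))
  have key2 : ∀ i j, ratio01 (Wt i j) (W i j) ≤ A2 := fun i j => by
    rw [hA2d]
    exact Finset.le_sup' (fun p : Fin n × Fin n => ratio01 (Wt p.1 p.2) (W p.1 p.2))
      (Finset.mem_univ (i, j))
  have hA1 : ∀ i j, W i j ≤ A1 * Wt i j := by
    intro i j
    by_cases h : Wt i j = 0
    · rw [(hsupp i j).2 h, h, mul_zero]
    · have hWt : 0 < Wt i j := lt_of_le_of_ne (hWtnn i j) (Ne.symm h)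
      have hr := key1 i j
      rw [ratio01, if_neg (by tauto)] at hr
      exact (div_le_iff₀ hWt).1 hr
  have hA2 : ∀ i j, Wt i j ≤ A2 * W i j := by
    intro i j
    by_cases h : W i j = 0
    · rw [(hsupp i j).1 h, h, mul_zero]
    · have hW : 0 < W i j := lt_of_le_of_ne (hWnn i j) (Ne.symm h)
      have hr := key2 i j
      rw [ratio01, if_neg (by tauto)] at hr
      exact (div_le_iff₀ hW).1 hr
  obtain ⟨j, hj⟩ := hWrow ⟨0, by omega⟩
  have hWtj : 0 < Wt ⟨0, by omega⟩ j :=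
    lt_of_le_of_ne (hWtnn _ j) (Ne.symm fun h => hj.ne' ((hsupp _ j).2 h))
  have hA1pos : 0 < A1 :=
    lt_of_lt_of_le (by rw [ratio01, if_neg (by push_neg; intro h; exact absurd h hj.ne')]
                       exact div_pos hj hWtj) (key1 _ j)
  have hA2pos : 0 < A2 :=
    lt_of_lt_of_le (by rw [ratio01, if_neg (by push_neg; intro h; exact absurd h hWtj.ne')]
                       exact div_pos hWtj hj) (key2 _ j)
  exact main_aux W Wt hn hWsym hWtsym hWnn hWtnn hWrow hWtrow A1 A2 hA1pos hA2pos hA1 hA2
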